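/- Let (T̃_t^α g)(x) = (4πt)^{-1/2} e^{2αx} ∫_x^∞ e^{-2αz} ∫_0^∞ [((z−y+4αt)/(2t)) e^{-(z−y)²/(4t)} + ((z+y−4αt)/(2t)) e^{-(z+y)²/(4t)}] g(y) dy dz, and let (T_t^Neu g)(x) = (4πt)^{-1/2} ∫_0^∞ [e^{-(x−y)²/(4t)} + e^{-(x+y)²/(4t)}] g(y) dy. Then for every bounded continuous g : (0,∞) → ℝ with compact support, every t > 0 and x > 0, lim_{α→0⁺} (T̃_t^α g)(x) = (T_t^Neu g)(x). -/

import Mathlib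

open Real MeasureTheory Set Filter Topology

/-- Neumann heat semigroup on the half-line. -/
noncomputable def TNeu (t : ℝ) (g : ℝ → ℝ) (x : ℝ) : ℝ :=
  ∫ y in Set.Ioi (0 : ℝ),
    (Real.exp (-(x - y) ^ 2 / (4 * t)) + Real.exp (-(x + y) ^ 2 / (4 * t)))
      * g y / Real.sqrt (4 * Real.pi * t)

/-- The semigroup associated to the Robin problem on the half-line. -/
noncomputable def Ttilde (α t : ℝ) (g : ℝ → ℝ) (x : ℝ) : ℝ :=
  Real.exp (2 * α * x) *
    ∫ z in Set.Ici x, Real.exp (-2 * α * z) *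
      (∫ y in Set.Ioi (0 : ℝ),
        (((z - y + 4 * α * t) / (2 * t)) * Real.exp (-(z - y) ^ 2 / (4 * t))
          + ((z + y - 4 * α * t) / (2 * t)) * Real.exp (-(z + y) ^ 2 / (4 * t)))
        * g y) / Real.sqrt (4 * Real.pi * t)



lemma intOn_id_mul_exp {b x : ℝ} (hb : 0 < b) (hx : 0 < x) :
    MeasureTheory.IntegrableOn (fun z : ℝ => z * Real.exp (-b * z)) (Set.Ioi x) := by
  have h := integrableOn_rpow_mul_exp_neg_mul_rpow (s := 1) (p := 1) (by norm_num) one_pos hb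
  simp only [Real.rpow_one] at h
  exact h.mono_set (Set.Ioi_subset_Ioi hx.le)

lemma intOn_gauss {t : ℝ} (x : ℝ) (ht : 0 < t) :
    MeasureTheory.IntegrableOn (fun z : ℝ => Real.exp (-z ^ 2 / (4 * t))) (Set.Ioi x) := by
  have h := (integrable_exp_neg_mul_sq (b := 1 / (4 * t)) (by positivity)).integrableOn
    (s := Set.Ioi x)
  refine h.congr_fun (fun z _ => ?_) measurableSet_Ioi
  ring_nf

lemma gauss_le_one {t a : ℝ} (ht : 0 < t) : Real.exp (-a ^ 2 / (4 * t)) ≤ 1 := by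
  rw [show (1:ℝ) = Real.exp 0 by simp]
  apply Real.exp_le_exp.2
  rw [neg_div]
  exact neg_nonpos.2 (div_nonneg (sq_nonneg a) (by linarith))

lemma coeff_abs_bound {α t : ℝ} (ht : 0 < t) (hα : 0 < α) {z : ℝ} (y : ℝ) (hz0 : 0 < z) :
    |((z - y + 4 * α * t) / (2 * t)) * Real.exp (-(z - y) ^ 2 / (4 * t))
      + ((z + y + 4 * α * t) / (2 * t)) * Real.exp (-(z + y) ^ 2 / (4 * t))|
      ≤ (z + |y| + 4 * α * t) / t := by
  have e1 : Real.exp (-(z - y) ^ 2 / (4 * t)) ≤ 1 := gauss_le_one ht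
  have e2 : Real.exp (-(z + y) ^ 2 / (4 * t)) ≤ 1 := gauss_le_one ht
  have e1' : 0 < Real.exp (-(z - y) ^ 2 / (4 * t)) := Real.exp_pos _
  have e2' : 0 < Real.exp (-(z + y) ^ 2 / (4 * t)) := Real.exp_pos _
  have hat : 0 < 4 * α * t := by positivity
  have hy1 := le_abs_self y
  have hy2 := neg_abs_le y
  have hc1 : |(z - y + 4 * α * t) / (2 * t)| ≤ (z + |y| + 4 * α * t) / (2 * t) := by
    rw [abs_div, abs_of_pos (show (0:ℝ) < 2 * t by linarith)]
    gcongr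
    rcases abs_cases (z - y + 4 * α * t) with ⟨h, _⟩ | ⟨h, _⟩ <;> rw [h] <;> linarith
  have hc2 : |(z + y + 4 * α * t) / (2 * t)| ≤ (z + |y| + 4 * α * t) / (2 * t) := by
    rw [abs_div, abs_of_pos (show (0:ℝ) < 2 * t by linarith)]
    gcongr
    rcases abs_cases (z + y + 4 * α * t) with ⟨h, _⟩ | ⟨h, _⟩ <;> rw [h] <;> linarith
  have h1 : |((z - y + 4 * α * t) / (2 * t)) * Real.exp (-(z - y) ^ 2 / (4 * t))|
      ≤ (z + |y| + 4 * α * t) / (2 * t) := by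
    rw [abs_mul, abs_of_pos e1']
    exact (mul_le_of_le_one_right (abs_nonneg _) e1).trans hc1
  have h2 : |((z + y + 4 * α * t) / (2 * t)) * Real.exp (-(z + y) ^ 2 / (4 * t))|
      ≤ (z + |y| + 4 * α * t) / (2 * t) := by
    rw [abs_mul, abs_of_pos e2']
    exact (mul_le_of_le_one_right (abs_nonneg _) e2).trans hc2
  calc |_ + _| ≤ _ + _ := abs_add_le _ _
    _ ≤ (z + |y| + 4 * α * t) / (2 * t) + (z + |y| + 4 * α * t) / (2 * t) := add_le_add h1 h2
    _ = (z + |y| + 4 * α * t) / t := by field_simp; ring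

lemma zint {α t x : ℝ} (y : ℝ) (ht : 0 < t) (hα : 0 < α) (hx : 0 < x) :
    ∫ z in Set.Ici x, Real.exp (-2 * α * z) *
      (((z - y + 4 * α * t) / (2 * t)) * Real.exp (-(z - y) ^ 2 / (4 * t))
        + ((z + y + 4 * α * t) / (2 * t)) * Real.exp (-(z + y) ^ 2 / (4 * t)))
    = Real.exp (-2 * α * x) *
        (Real.exp (-(x - y) ^ 2 / (4 * t)) + Real.exp (-(x + y) ^ 2 / (4 * t))) := by
  set F : ℝ → ℝ := fun z => Real.exp (-2 * α * z) *
      (((z - y + 4 * α * t) / (2 * t)) * Real.exp (-(z - y) ^ 2 / (4 * t))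
        + ((z + y + 4 * α * t) / (2 * t)) * Real.exp (-(z + y) ^ 2 / (4 * t))) with hF
  set φ : ℝ → ℝ := fun z => Real.exp (-2 * α * z) *
      (Real.exp (-(z - y) ^ 2 / (4 * t)) + Real.exp (-(z + y) ^ 2 / (4 * t))) with hφ
  have hderiv : ∀ z : ℝ, HasDerivAt φ (-(F z)) z := by
    intro z
    have h1 : HasDerivAt (fun z : ℝ => Real.exp (-2 * α * z))
        (-2 * α * Real.exp (-2 * α * z)) z := by
      simpa [mul_comm] using (((hasDerivAt_id z).const_mul (-2 * α)).exp)
    have h2 : HasDerivAt (fun z : ℝ => Real.exp (-(z - y) ^ 2 / (4 * t)))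
        (Real.exp (-(z - y) ^ 2 / (4 * t)) * (-(2 * (z - y)) / (4 * t))) z := by
      have hu : HasDerivAt (fun z : ℝ => -(z - y) ^ 2 / (4 * t))
          (-(2 * (z - y)) / (4 * t)) z := by
        have := (((hasDerivAt_id z).sub_const y).pow 2).neg.div_const (4 * t)
        simpa using this
      exact hu.exp
    have h3 : HasDerivAt (fun z : ℝ => Real.exp (-(z + y) ^ 2 / (4 * t)))
        (Real.exp (-(z + y) ^ 2 / (4 * t)) * (-(2 * (z + y)) / (4 * t))) z := by
      have hu : HasDerivAt (fun z : ℝ => -(z + y) ^ 2 / (4 * t))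
          (-(2 * (z + y)) / (4 * t)) z := by
        have := (((hasDerivAt_id z).add_const y).pow 2).neg.div_const (4 * t)
        simpa using this
      exact hu.exp
    have : HasDerivAt (fun z : ℝ => Real.exp (-2 * α * z) *
        (Real.exp (-(z - y) ^ 2 / (4 * t)) + Real.exp (-(z + y) ^ 2 / (4 * t))))
        (-2 * α * Real.exp (-2 * α * z) *
          (Real.exp (-(z - y) ^ 2 / (4 * t)) + Real.exp (-(z + y) ^ 2 / (4 * t)))
          + Real.exp (-2 * α * z) * (Real.exp (-(z - y) ^ 2 / (4 * t)) * (-(2 * (z - y)) / (4 * t))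
            + Real.exp (-(z + y) ^ 2 / (4 * t)) * (-(2 * (z + y)) / (4 * t)))) z :=
      h1.fun_mul (h2.fun_add h3)
    convert this using 1
    simp only [hF]
    field_simp
    ring
  have htend : Tendsto φ atTop (𝓝 0) := by
    have hb : Tendsto (fun z : ℝ => 2 * Real.exp (-2 * α * z)) atTop (𝓝 0) := by
      have : Tendsto (fun z : ℝ => Real.exp (-(2 * α * z))) atTop (𝓝 0) :=
        Real.tendsto_exp_neg_atTop_nhds_zero.comp
          (tendsto_id.const_mul_atTop (by positivity))
      simpa [neg_mul, mul_comm, mul_assoc] using this.const_mul 2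
    refine squeeze_zero_norm (fun z => ?_) hb
    have e1 : Real.exp (-(z - y) ^ 2 / (4 * t)) ≤ 1 := gauss_le_one ht
    have e2 : Real.exp (-(z + y) ^ 2 / (4 * t)) ≤ 1 := gauss_le_one ht
    have e1' : 0 < Real.exp (-(z - y) ^ 2 / (4 * t)) := Real.exp_pos _
    have e2' : 0 < Real.exp (-(z + y) ^ 2 / (4 * t)) := Real.exp_pos _
    have hpos : (0:ℝ) < Real.exp (-2 * α * z) := Real.exp_pos _
    have : |φ z| ≤ Real.exp (-2 * α * z) * 2 := by
      rw [hφ, abs_mul, abs_of_pos hpos]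
      have h2 : |Real.exp (-(z - y) ^ 2 / (4 * t)) + Real.exp (-(z + y) ^ 2 / (4 * t))| ≤ 2 := by
        rw [abs_of_pos (by positivity)]
        linarith
      nlinarith [hpos.le]
    simpa [Real.norm_eq_abs, mul_comm] using this
  have hFint : MeasureTheory.IntegrableOn F (Set.Ioi x) := by
    have hmeas : MeasureTheory.AEStronglyMeasurable F (volume.restrict (Set.Ioi x)) := by
      apply Continuous.aestronglyMeasurable
      fun_prop
    have hb1 : MeasureTheory.IntegrableOn
        (fun z : ℝ => (z * Real.exp (-(2 * α) * z)) * (1 / t)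
          + ((|y| + 4 * α * t) / t) * Real.exp (-(2 * α) * z)) (Set.Ioi x) :=
      ((intOn_id_mul_exp (by positivity) hx).mul_const _).add
        ((exp_neg_integrableOn_Ioi x (by positivity)).const_mul _)
    refine hb1.mono' hmeas ?_
    filter_upwards [MeasureTheory.ae_restrict_mem measurableSet_Ioi] with z hz
    have hz0 : 0 < z := hx.trans hz
    have hpos : (0:ℝ) < Real.exp (-2 * α * z) := Real.exp_pos _
    have habs := coeff_abs_bound ht hα y hz0
    have : ‖F z‖ ≤ Real.exp (-2 * α * z) * ((z + |y| + 4 * α * t) / t) := by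
      rw [hF, Real.norm_eq_abs, abs_mul, abs_of_pos hpos]
      exact mul_le_mul_of_nonneg_left habs hpos.le
    refine this.trans (le_of_eq ?_)
    have hexp : Real.exp (-(2 * α) * z) = Real.exp (-2 * α * z) := by ring_nf
    rw [hexp]
    field_simp
    ring
  rw [MeasureTheory.integral_Ici_eq_integral_Ioi]
  have h0 := MeasureTheory.integral_Ioi_of_hasDerivAt_of_tendsto'
    (fun z _ => hderiv z) hFint.neg htend
  rw [MeasureTheory.integral_neg] at h0
  have h1 : ∫ z in Set.Ioi x, F z = φ x := by
    simp only [zero_sub] at h0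
    linarith
  exact h1

lemma psi_bound {t : ℝ} (ht : 0 < t) (g : ℝ → ℝ) (hgs : HasCompactSupport g)
    (M : ℝ) (hM0 : 0 ≤ M) (hM : ∀ y, ‖g y‖ ≤ M) {z : ℝ} (hz : 0 ≤ z) :
    ‖∫ y in Set.Ioi (0:ℝ), Real.exp (-(z + y) ^ 2 / (4 * t)) * g y‖
      ≤ M * (volume (tsupport g)).toReal * Real.exp (-z ^ 2 / (4 * t)) := by
  have hKm : MeasurableSet (tsupport g) := (isClosed_tsupport g).measurableSet
  have hfin : volume (tsupport g) < ⊤ := hgs.measure_lt_top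
  set c : ℝ := M * Real.exp (-z ^ 2 / (4 * t)) with hc
  have hc0 : 0 ≤ c := by positivity
  have hle : (volume.restrict (Set.Ioi 0)) (tsupport g) ≤ volume (tsupport g) :=
    Measure.restrict_apply_le _ _
  have h1 : Integrable ((tsupport g).indicator (fun _ => c)) (volume.restrict (Set.Ioi 0)) := by
    rw [integrable_indicator_iff hKm]
    exact integrableOn_const (lt_of_le_of_lt hle hfin).ne
  have h2 : ‖∫ y in Set.Ioi (0:ℝ), Real.exp (-(z + y) ^ 2 / (4 * t)) * g y‖
      ≤ ∫ y in Set.Ioi (0:ℝ), (tsupport g).indicator (fun _ => c) y := by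
    apply norm_integral_le_of_norm_le h1
    filter_upwards [MeasureTheory.ae_restrict_mem measurableSet_Ioi] with y hy
    by_cases hyK : y ∈ tsupport g
    · rw [Set.indicator_of_mem hyK]
      have hsq : z ^ 2 ≤ (z + y) ^ 2 := by nlinarith [hy.out]
      have hexp : Real.exp (-(z + y) ^ 2 / (4 * t)) ≤ Real.exp (-z ^ 2 / (4 * t)) := by
        gcongr
      calc ‖Real.exp (-(z + y) ^ 2 / (4 * t)) * g y‖
          = Real.exp (-(z + y) ^ 2 / (4 * t)) * ‖g y‖ := by
            rw [norm_mul, Real.norm_eq_abs, abs_of_pos (Real.exp_pos _)]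
        _ ≤ Real.exp (-z ^ 2 / (4 * t)) * M :=
            mul_le_mul hexp (hM y) (norm_nonneg _) (Real.exp_pos _).le
        _ = c := by rw [hc]; ring
    · have : g y = 0 := image_eq_zero_of_notMem_tsupport hyK
      rw [Set.indicator_of_notMem hyK, this]
      simp
  have h3 : ∫ y in Set.Ioi (0:ℝ), (tsupport g).indicator (fun _ => c) y
      = ((volume.restrict (Set.Ioi 0)) (tsupport g)).toReal • c :=
    MeasureTheory.integral_indicator_const c hKm
  refine h2.trans ?_
  rw [h3, smul_eq_mul]
  have := ENNReal.toReal_mono hfin.ne hle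
  calc ((volume.restrict (Set.Ioi 0)) (tsupport g)).toReal * c
      ≤ (volume (tsupport g)).toReal * c := mul_le_mul_of_nonneg_right this hc0
    _ = M * (volume (tsupport g)).toReal * Real.exp (-z ^ 2 / (4 * t)) := by rw [hc]; ring

theorem Ttilde_tendsto_TNeu (t x : ℝ) (ht : 0 < t) (hx : 0 < x)
    (g : ℝ → ℝ) (hgc : Continuous g) (hgs : HasCompactSupport g)
    (hsupp : Function.support g ⊆ Set.Ioi (0 : ℝ)) :
    Tendsto (fun α : ℝ => Ttilde α t g x) (𝓝[>] 0) (𝓝 (TNeu t g x)) := by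
  obtain ⟨M, hM⟩ := hgs.exists_bound_of_continuous hgc
  have hM0 : 0 ≤ M := (norm_nonneg (g 0)).trans (hM 0)
  obtain ⟨R, hR⟩ : ∃ R : ℝ, ∀ y ∈ tsupport g, |y| ≤ R := by
    obtain ⟨r, hr⟩ := hgs.isBounded.subset_closedBall 0
    exact ⟨r, fun y hy => by simpa [Real.dist_eq] using hr hy⟩
  set s : ℝ := Real.sqrt (4 * Real.pi * t) with hsdef
  have hs : 0 < s := Real.sqrt_pos.2 (by positivity)
  set C0 : ℝ := M * (volume (tsupport g)).toReal with hC0def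
  have hC00 : 0 ≤ C0 := mul_nonneg hM0 ENNReal.toReal_nonneg
  set B : ℝ → ℝ := fun α => Real.exp (2 * α * x) *
    ∫ z in Set.Ici x, Real.exp (-2 * α * z) *
      (4 * α * ∫ y in Set.Ioi (0:ℝ), Real.exp (-(z + y) ^ 2 / (4 * t)) * g y) / s with hBdef
  have key : ∀ α : ℝ, 0 < α → Ttilde α t g x = TNeu t g x - B α := by
    intro α hα
    -- integrability in y
    have hyint : ∀ h : ℝ → ℝ, Continuous h →
        MeasureTheory.IntegrableOn (fun y => h y * g y) (Set.Ioi 0) := by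
      intro h hh
      exact ((hh.mul hgc).integrable_of_hasCompactSupport hgs.mul_left).integrableOn
    -- the "plus" kernel
    set KP : ℝ → ℝ → ℝ := fun z y =>
      ((z - y + 4 * α * t) / (2 * t)) * Real.exp (-(z - y) ^ 2 / (4 * t))
        + ((z + y + 4 * α * t) / (2 * t)) * Real.exp (-(z + y) ^ 2 / (4 * t)) with hKP
    have hKPc : Continuous fun p : ℝ × ℝ => KP p.1 p.2 := by
      rw [hKP]; fun_prop
    -- pointwise split of the inner integral
    have hpt : ∀ z : ℝ,
        (∫ y in Set.Ioi (0:ℝ),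
          (((z - y + 4 * α * t) / (2 * t)) * Real.exp (-(z - y) ^ 2 / (4 * t))
            + ((z + y - 4 * α * t) / (2 * t)) * Real.exp (-(z + y) ^ 2 / (4 * t))) * g y)
        = (∫ y in Set.Ioi (0:ℝ), KP z y * g y)
          - 4 * α * ∫ y in Set.Ioi (0:ℝ), Real.exp (-(z + y) ^ 2 / (4 * t)) * g y := by
      intro z
      have i1 : MeasureTheory.IntegrableOn (fun y => KP z y * g y) (Set.Ioi 0) :=
        hyint _ (by rw [hKP]; fun_prop)
      have i2 : MeasureTheory.IntegrableOn
          (fun y => Real.exp (-(z + y) ^ 2 / (4 * t)) * g y) (Set.Ioi 0) :=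
        hyint _ (by fun_prop)
      have hpw : ∀ y : ℝ,
          (((z - y + 4 * α * t) / (2 * t)) * Real.exp (-(z - y) ^ 2 / (4 * t))
            + ((z + y - 4 * α * t) / (2 * t)) * Real.exp (-(z + y) ^ 2 / (4 * t))) * g y
          = KP z y * g y - 4 * α * (Real.exp (-(z + y) ^ 2 / (4 * t)) * g y) := by
        intro y
        rw [hKP]
        field_simp
        ring
      calc (∫ y in Set.Ioi (0:ℝ), _) = ∫ y in Set.Ioi (0:ℝ),
            (KP z y * g y - 4 * α * (Real.exp (-(z + y) ^ 2 / (4 * t)) * g y)) :=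
          MeasureTheory.integral_congr_ae (Filter.Eventually.of_forall hpw)
        _ = _ := by
          rw [MeasureTheory.integral_sub i1 (i2.const_mul _),
            MeasureTheory.integral_const_mul]
    -- product integrability for Fubini
    set f : ℝ → ℝ → ℝ := fun z y => Real.exp (-2 * α * z) * (KP z y * g y) with hf
    have hprod : MeasureTheory.Integrable (Function.uncurry f)
        ((volume.restrict (Set.Ici x)).prod (volume.restrict (Set.Ioi 0))) := by
      have hcont : Continuous (Function.uncurry f) := by
        rw [hf]
        apply Continuous.mul (by fun_prop)
        exact (hKPc.mul (hgc.comp continuous_snd))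
      set u : ℝ → ℝ := fun z => (z * Real.exp (-(2 * α) * z)) * (M / t)
        + ((R + 4 * α * t) * (M / t)) * Real.exp (-(2 * α) * z) with hu
      set v : ℝ → ℝ := fun y => (tsupport g).indicator (fun _ => (1:ℝ)) y with hv
      have huint : MeasureTheory.Integrable u (volume.restrict (Set.Ici x)) := by
        rw [show (volume.restrict (Set.Ici x)) = volume.restrict (Set.Ioi x) from Measure.restrict_congr_set Ioi_ae_eq_Ici.symm]
        exact ((intOn_id_mul_exp (by positivity) hx).mul_const _).add
          ((exp_neg_integrableOn_Ioi x (by positivity)).const_mul _)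
      have hvint : MeasureTheory.Integrable v (volume.restrict (Set.Ioi 0)) := by
        rw [hv, MeasureTheory.integrable_indicator_iff (isClosed_tsupport g).measurableSet]
        refine MeasureTheory.integrableOn_const (ne_of_lt ?_)
        exact lt_of_le_of_lt (MeasureTheory.Measure.restrict_apply_le _ _) hgs.measure_lt_top
      refine (huint.mul_prod hvint).mono' hcont.aestronglyMeasurable ?_
      rw [MeasureTheory.Measure.prod_restrict]
      filter_upwards [MeasureTheory.ae_restrict_mem (measurableSet_Ici.prod measurableSet_Ioi)]
        with p hp
      obtain ⟨hp1, hp2⟩ := hp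
      have hz0 : 0 < p.1 := lt_of_lt_of_le hx hp1
      have hexp : Real.exp (-(2 * α) * p.1) = Real.exp (-2 * α * p.1) := by ring_nf
      by_cases hyK : p.2 ∈ tsupport g
      · have hvy : v p.2 = 1 := by rw [hv]; simp [Set.indicator_of_mem hyK]
        have habs := coeff_abs_bound ht hα p.2 hz0
        have hRy : |p.2| ≤ R := hR _ hyK
        have hgb := hM p.2
        have hexp1 : (0:ℝ) < Real.exp (-2 * α * p.1) := Real.exp_pos _
        calc ‖Function.uncurry f p‖
            = Real.exp (-2 * α * p.1) * (|KP p.1 p.2| * ‖g p.2‖) := by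
              rw [hf]
              simp only [Function.uncurry]
              rw [norm_mul, norm_mul, Real.norm_eq_abs (Real.exp _),
                abs_of_pos hexp1, Real.norm_eq_abs (KP p.1 p.2)]
          _ ≤ Real.exp (-2 * α * p.1) * (((p.1 + |p.2| + 4 * α * t) / t) * M) := by
              apply mul_le_mul_of_nonneg_left _ hexp1.le
              exact mul_le_mul habs hgb (norm_nonneg _)
                (div_nonneg (by positivity) ht.le)
          _ ≤ Real.exp (-2 * α * p.1) * (((p.1 + R + 4 * α * t) / t) * M) := by
              apply mul_le_mul_of_nonneg_left _ hexp1.le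
              apply mul_le_mul_of_nonneg_right _ hM0
              gcongr
          _ = u p.1 * v p.2 := by
              simp only [hu, hvy, hexp]
              field_simp
              ring
      · have hg0 : g p.2 = 0 := image_eq_zero_of_notMem_tsupport hyK
        have : Function.uncurry f p = 0 := by
          rw [hf]; simp [Function.uncurry, hg0]
        rw [this, hv]
        simp [Set.indicator_of_notMem hyK]
    -- integrability of the two z-integrands
    have hintP : MeasureTheory.IntegrableOn
        (fun z => Real.exp (-2 * α * z) * (∫ y in Set.Ioi (0:ℝ), KP z y * g y) / s)
        (Set.Ici x) := by
      have h1 : MeasureTheory.Integrable (fun z => ∫ y in Set.Ioi (0:ℝ), f z y)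
          (volume.restrict (Set.Ici x)) := hprod.integral_prod_left
      refine (h1.congr (Filter.Eventually.of_forall fun z => ?_)).div_const s
      rw [hf]
      exact MeasureTheory.integral_const_mul _ _
    have hΨm : MeasureTheory.AEStronglyMeasurable
        (fun z => ∫ y in Set.Ioi (0:ℝ), Real.exp (-(z + y) ^ 2 / (4 * t)) * g y)
        (volume.restrict (Set.Ici x)) := by
      apply StronglyMeasurable.aestronglyMeasurable
      apply MeasureTheory.StronglyMeasurable.integral_prod_right'
        (f := fun p : ℝ × ℝ => Real.exp (-(p.1 + p.2) ^ 2 / (4 * t)) * g p.2)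
      exact Continuous.stronglyMeasurable (by fun_prop)
    have hintPsi : MeasureTheory.IntegrableOn
        (fun z => Real.exp (-2 * α * z) *
          (4 * α * ∫ y in Set.Ioi (0:ℝ), Real.exp (-(z + y) ^ 2 / (4 * t)) * g y) / s)
        (Set.Ici x) := by
      have hbint : MeasureTheory.IntegrableOn
          (fun z => (4 * α * C0 / s) * Real.exp (-z ^ 2 / (4 * t))) (Set.Ici x) := by
        rw [integrableOn_Ici_iff_integrableOn_Ioi]
        exact (intOn_gauss x ht).const_mul _
      refine hbint.mono' ?_ ?_
      · refine (((Continuous.aestronglyMeasurable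
            (continuous_exp.comp (by fun_prop) : Continuous fun z : ℝ => Real.exp (-2 * α * z))).mul
          (hΨm.const_mul (4 * α))).const_mul s⁻¹).congr
          (Filter.Eventually.of_forall fun z => ?_)
        simp only [Pi.mul_apply, Function.comp_apply]
        ring
      · filter_upwards [MeasureTheory.ae_restrict_mem measurableSet_Ici] with z hz
        have hz0 : (0:ℝ) ≤ z := (hx.trans_le hz).le
        have h1 : Real.exp (-2 * α * z) ≤ 1 := Real.exp_le_one_iff.2 (by nlinarith)
        have h2 := psi_bound ht g hgs M hM0 hM hz0
        have heq : ‖Real.exp (-2 * α * z) *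
            (4 * α * ∫ y in Set.Ioi (0:ℝ), Real.exp (-(z + y) ^ 2 / (4 * t)) * g y) / s‖
            = Real.exp (-2 * α * z) *
              (4 * α * ‖∫ y in Set.Ioi (0:ℝ), Real.exp (-(z + y) ^ 2 / (4 * t)) * g y‖) / s := by
          rw [norm_div, norm_mul, norm_mul, Real.norm_eq_abs (Real.exp _),
            abs_of_pos (Real.exp_pos _), Real.norm_eq_abs (4 * α),
            abs_of_pos (by positivity : (0:ℝ) < 4 * α), Real.norm_eq_abs s, abs_of_pos hs]
        rw [heq]
        calc Real.exp (-2 * α * z) *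
            (4 * α * ‖∫ y in Set.Ioi (0:ℝ), Real.exp (-(z + y) ^ 2 / (4 * t)) * g y‖) / s
            ≤ 1 * (4 * α * (C0 * Real.exp (-z ^ 2 / (4 * t)))) / s := by gcongr
          _ = (4 * α * C0 / s) * Real.exp (-z ^ 2 / (4 * t)) := by ring
    -- Fubini and the explicit z-integral
    have hfub : (∫ z in Set.Ici x,
          Real.exp (-2 * α * z) * (∫ y in Set.Ioi (0:ℝ), KP z y * g y) / s)
        = (∫ y in Set.Ioi (0:ℝ), (Real.exp (-2 * α * x) *
            (Real.exp (-(x - y) ^ 2 / (4 * t)) + Real.exp (-(x + y) ^ 2 / (4 * t)))) * g y)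
          / s := by
      rw [MeasureTheory.integral_div]
      congr 1
      calc (∫ z in Set.Ici x, Real.exp (-2 * α * z) * ∫ y in Set.Ioi (0:ℝ), KP z y * g y)
          = ∫ z in Set.Ici x, ∫ y in Set.Ioi (0:ℝ), f z y := by
            refine MeasureTheory.integral_congr_ae (Filter.Eventually.of_forall fun z => ?_)
            rw [hf]
            exact (MeasureTheory.integral_const_mul _ _).symm
        _ = ∫ y in Set.Ioi (0:ℝ), ∫ z in Set.Ici x, f z y :=
            MeasureTheory.integral_integral_swap hprod
        _ = ∫ y in Set.Ioi (0:ℝ), (Real.exp (-2 * α * x) *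
              (Real.exp (-(x - y) ^ 2 / (4 * t)) + Real.exp (-(x + y) ^ 2 / (4 * t)))) * g y := by
            refine MeasureTheory.integral_congr_ae (Filter.Eventually.of_forall fun y => ?_)
            calc (∫ z in Set.Ici x, f z y)
                = ∫ z in Set.Ici x, (Real.exp (-2 * α * z) * KP z y) * g y := by
                  refine MeasureTheory.integral_congr_ae (Filter.Eventually.of_forall fun z => ?_)
                  rw [hf]; ring
              _ = (∫ z in Set.Ici x, Real.exp (-2 * α * z) * KP z y) * g y :=
                  MeasureTheory.integral_mul_const _ _
              _ = (Real.exp (-2 * α * x) *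
                    (Real.exp (-(x - y) ^ 2 / (4 * t)) + Real.exp (-(x + y) ^ 2 / (4 * t)))) * g y := by
                  rw [show (∫ z in Set.Ici x, Real.exp (-2 * α * z) * KP z y)
                    = Real.exp (-2 * α * x) *
                      (Real.exp (-(x - y) ^ 2 / (4 * t)) + Real.exp (-(x + y) ^ 2 / (4 * t)))
                    from zint y ht hα hx]
    -- assembly
    have hexp1 : Real.exp (2 * α * x) * Real.exp (-2 * α * x) = 1 := by
      rw [← Real.exp_add, show 2 * α * x + -2 * α * x = 0 by ring, Real.exp_zero]
    calc Ttilde α t g x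
        = Real.exp (2 * α * x) * ∫ z in Set.Ici x,
            (Real.exp (-2 * α * z) * (∫ y in Set.Ioi (0:ℝ), KP z y * g y) / s
              - Real.exp (-2 * α * z) *
                (4 * α * ∫ y in Set.Ioi (0:ℝ), Real.exp (-(z + y) ^ 2 / (4 * t)) * g y) / s) := by
          unfold Ttilde
          rw [← hsdef]
          congr 1
          refine MeasureTheory.integral_congr_ae (Filter.Eventually.of_forall fun z => ?_)
          beta_reduce
          rw [hpt z]
          ring
      _ = Real.exp (2 * α * x) *
            ((∫ z in Set.Ici x,
              Real.exp (-2 * α * z) * (∫ y in Set.Ioi (0:ℝ), KP z y * g y) / s)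
            - ∫ z in Set.Ici x, Real.exp (-2 * α * z) *
                (4 * α * ∫ y in Set.Ioi (0:ℝ), Real.exp (-(z + y) ^ 2 / (4 * t)) * g y) / s) := by
          rw [MeasureTheory.integral_sub hintP hintPsi]
      _ = TNeu t g x - B α := by
          have hTNeu : TNeu t g x = (∫ y in Set.Ioi (0:ℝ),
              (Real.exp (-(x - y) ^ 2 / (4 * t)) + Real.exp (-(x + y) ^ 2 / (4 * t))) * g y) / s := by
            unfold TNeu
            rw [← hsdef]
            exact MeasureTheory.integral_div _ _
          have hpull : (∫ y in Set.Ioi (0:ℝ), (Real.exp (-2 * α * x) *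
              (Real.exp (-(x - y) ^ 2 / (4 * t)) + Real.exp (-(x + y) ^ 2 / (4 * t)))) * g y)
              = Real.exp (-2 * α * x) * ∫ y in Set.Ioi (0:ℝ),
                (Real.exp (-(x - y) ^ 2 / (4 * t)) + Real.exp (-(x + y) ^ 2 / (4 * t))) * g y := by
            rw [← MeasureTheory.integral_const_mul]
            refine MeasureTheory.integral_congr_ae (Filter.Eventually.of_forall fun y => ?_)
            ring
          rw [hfub, hpull, hTNeu, hBdef]
          linear_combination ((∫ y in Set.Ioi (0:ℝ),
            (Real.exp (-(x - y) ^ 2 / (4 * t)) + Real.exp (-(x + y) ^ 2 / (4 * t))) * g y) / s)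
            * hexp1
  -- the correction term tends to zero
  set Cg : ℝ := ∫ z in Set.Ioi x, Real.exp (-z ^ 2 / (4 * t)) with hCgdef
  have hΨm' : MeasureTheory.AEStronglyMeasurable
      (fun z => ∫ y in Set.Ioi (0:ℝ), Real.exp (-(z + y) ^ 2 / (4 * t)) * g y)
      (volume.restrict (Set.Ici x)) := by
    apply StronglyMeasurable.aestronglyMeasurable
    apply MeasureTheory.StronglyMeasurable.integral_prod_right'
      (f := fun p : ℝ × ℝ => Real.exp (-(p.1 + p.2) ^ 2 / (4 * t)) * g p.2)
    exact Continuous.stronglyMeasurable (by fun_prop)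
  have hBb : ∀ α : ℝ, 0 < α → ‖B α‖ ≤ Real.exp (2 * α * x) * (4 * α * C0 / s) * Cg := by
    intro α hα
    have hbint : MeasureTheory.IntegrableOn
        (fun z => (4 * α * C0 / s) * Real.exp (-z ^ 2 / (4 * t))) (Set.Ici x) := by
      rw [integrableOn_Ici_iff_integrableOn_Ioi]
      exact (intOn_gauss x ht).const_mul _
    have hnorm : ‖∫ z in Set.Ici x, Real.exp (-2 * α * z) *
        (4 * α * ∫ y in Set.Ioi (0:ℝ), Real.exp (-(z + y) ^ 2 / (4 * t)) * g y) / s‖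
        ≤ ∫ z in Set.Ici x, (4 * α * C0 / s) * Real.exp (-z ^ 2 / (4 * t)) := by
      apply MeasureTheory.norm_integral_le_of_norm_le hbint
      filter_upwards [MeasureTheory.ae_restrict_mem measurableSet_Ici] with z hz
      have hz0 : (0:ℝ) ≤ z := (hx.trans_le hz).le
      have h1 : Real.exp (-2 * α * z) ≤ 1 := Real.exp_le_one_iff.2 (by nlinarith)
      have h2 := psi_bound ht g hgs M hM0 hM hz0
      have heq : ‖Real.exp (-2 * α * z) *
          (4 * α * ∫ y in Set.Ioi (0:ℝ), Real.exp (-(z + y) ^ 2 / (4 * t)) * g y) / s‖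
          = Real.exp (-2 * α * z) *
            (4 * α * ‖∫ y in Set.Ioi (0:ℝ), Real.exp (-(z + y) ^ 2 / (4 * t)) * g y‖) / s := by
        rw [norm_div, norm_mul, norm_mul, Real.norm_eq_abs (Real.exp _),
          abs_of_pos (Real.exp_pos _), Real.norm_eq_abs (4 * α),
          abs_of_pos (by positivity : (0:ℝ) < 4 * α), Real.norm_eq_abs s, abs_of_pos hs]
      rw [heq]
      calc Real.exp (-2 * α * z) *
          (4 * α * ‖∫ y in Set.Ioi (0:ℝ), Real.exp (-(z + y) ^ 2 / (4 * t)) * g y‖) / s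
          ≤ 1 * (4 * α * (C0 * Real.exp (-z ^ 2 / (4 * t)))) / s := by gcongr
        _ = (4 * α * C0 / s) * Real.exp (-z ^ 2 / (4 * t)) := by ring
    have hval : (∫ z in Set.Ici x, (4 * α * C0 / s) * Real.exp (-z ^ 2 / (4 * t)))
        = (4 * α * C0 / s) * Cg := by
      rw [MeasureTheory.integral_const_mul, hCgdef, MeasureTheory.integral_Ici_eq_integral_Ioi]
    have hBeq : ‖B α‖ = Real.exp (2 * α * x) * ‖∫ z in Set.Ici x, Real.exp (-2 * α * z) *
        (4 * α * ∫ y in Set.Ioi (0:ℝ), Real.exp (-(z + y) ^ 2 / (4 * t)) * g y) / s‖ := by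
      rw [hBdef]
      rw [norm_mul, Real.norm_eq_abs (Real.exp _), abs_of_pos (Real.exp_pos _)]
    rw [hBeq, show Real.exp (2 * α * x) * (4 * α * C0 / s) * Cg
      = Real.exp (2 * α * x) * ((4 * α * C0 / s) * Cg) from by ring]
    apply mul_le_mul_of_nonneg_left _ (Real.exp_pos _).le
    rw [← hval]
    exact hnorm
  have hb : Tendsto (fun α : ℝ => Real.exp (2 * α * x) * (4 * α * C0 / s) * Cg)
      (𝓝[>] 0) (𝓝 0) := by
    have hcb : Continuous fun α : ℝ => Real.exp (2 * α * x) * (4 * α * C0 / s) * Cg := by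
      fun_prop
    have h1 := (hcb.tendsto 0).mono_left (nhdsWithin_le_nhds (s := Set.Ioi (0:ℝ)))
    simpa using h1
  have hBtend : Tendsto B (𝓝[>] 0) (𝓝 0) := by
    apply squeeze_zero_norm' _ hb
    filter_upwards [self_mem_nhdsWithin] with α hα
    exact hBb α hα
  have hfinal : Tendsto (fun α : ℝ => TNeu t g x - B α) (𝓝[>] 0) (𝓝 (TNeu t g x)) := by
    simpa using (tendsto_const_nhds (f := 𝓝[>] (0:ℝ)) (x := TNeu t g x)).sub hBtend
  apply hfinal.congr'
  filter_upwards [self_mem_nhdsWithin] with α hα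
  exact (key α hα).symm
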